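/- Let q be a prime power, n ≥ 1, and let j be an integer with 0 ≤ j ≤ n−1. Set ℓ = gcd(j, n) and let c ∈ F_{q^n} satisfy c^{(q^n−1)/(q^ℓ−1)} ≠ 1. Then the F_q-linear map g : F_{q^n} → F_{q^n} defined by g(y) = y − c·y^{q^j} is bijective. -/

import Mathlib

/-- Let `E/F` be an extension of finite fields with `|F| = q` and `[E : F] = n`. For
`0 ≤ j ≤ n−1`, `ℓ = gcd(j, n)` and `c ∈ E` with `c^((q^n−1)/(q^ℓ−1)) ≠ 1`, the
`F`-linear map `y ↦ y − c·y^{q^j}` is bijective. -/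
theorem stmt4 (q n j : ℕ) (F E : Type) [Field F] [Fintype F] [Field E] [Fintype E]
    [Algebra F E] (hq : Fintype.card F = q) (hn : Module.finrank F E = n) (hn1 : 1 ≤ n)
    (hj : j ≤ n - 1) (c : E)
    (hc : c ^ ((q ^ n - 1) / (q ^ Nat.gcd j n - 1)) ≠ 1) :
    Function.Bijective (fun y : E => y - c * y ^ q ^ j) := by
  rw [← Finite.injective_iff_bijective]
  obtain ⟨p, hpi⟩ := CharP.exists F
  haveI : CharP E p := charP_of_injective_algebraMap (algebraMap F E).injective p
  obtain ⟨m, hp, hcard⟩ := FiniteField.card F p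
  haveI : Fact p.Prime := ⟨hp⟩
  have hqpm : q = p ^ (m : ℕ) := by rw [← hq, hcard]
  have hcardE : Fintype.card E = q ^ n := by
    rw [Module.card_eq_pow_finrank (K := F) (V := E), hq, hn]
  have hq2 : 2 ≤ q := hq ▸ Fintype.one_lt_card
  intro y z hyz
  by_contra hne
  simp only at hyz
  set w := y - z with hw
  have hw0 : w ≠ 0 := sub_ne_zero.mpr hne
  have hfrob : (y - z) ^ q ^ j = y ^ q ^ j - z ^ q ^ j := by
    rw [hqpm, ← pow_mul]
    exact sub_pow_char_pow ..
  have key : w = c * w ^ q ^ j := by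
    rw [hw, hfrob]
    linear_combination hyz
  set ℓ := Nat.gcd j n with hl
  set N := (q ^ n - 1) / (q ^ ℓ - 1) with hN
  have hdl : q ^ ℓ - 1 ∣ q ^ j - 1 := by
    obtain ⟨k, hk⟩ := Nat.gcd_dvd_left j n
    calc q ^ ℓ - 1 ∣ (q ^ ℓ) ^ k - 1 ^ k := Nat.sub_dvd_pow_sub_pow _ 1 k
      _ = q ^ j - 1 := by rw [← pow_mul, one_pow, ← hk]
  have hdn : q ^ ℓ - 1 ∣ q ^ n - 1 := by
    obtain ⟨k, hk⟩ := Nat.gcd_dvd_right j n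
    calc q ^ ℓ - 1 ∣ (q ^ ℓ) ^ k - 1 ^ k := Nat.sub_dvd_pow_sub_pow _ 1 k
      _ = q ^ n - 1 := by rw [← pow_mul, one_pow, ← hk]
  obtain ⟨k, hk⟩ := hdl
  have hNj : N * (q ^ j - 1) = (q ^ n - 1) * k := by
    rw [hk, ← mul_assoc, Nat.div_mul_cancel hdn]
  have hwn : w ^ (q ^ n - 1) = 1 := by
    rw [← hcardE]; exact FiniteField.pow_card_sub_one_eq_one w hw0
  have hkeyN : w ^ N = c ^ N * (w ^ q ^ j) ^ N := by
    conv_lhs => rw [key]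
    rw [mul_pow]
  have h1 : q ^ j - 1 + 1 = q ^ j := Nat.succ_pred_eq_of_pos (Nat.pow_pos (by omega))
  have hsplit : (q ^ j) * N = N + N * (q ^ j - 1) := by
    calc q ^ j * N = (q ^ j - 1 + 1) * N := by rw [h1]
      _ = N + N * (q ^ j - 1) := by ring
  have hwQN : (w ^ q ^ j) ^ N = w ^ N * w ^ (N * (q ^ j - 1)) := by
    rw [← pow_mul, hsplit, pow_add]
  have hvanish : w ^ (N * (q ^ j - 1)) = 1 := by
    rw [hNj, pow_mul, hwn, one_pow]
  rw [hwQN, hvanish, mul_one] at hkeyN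
  have hwN : w ^ N ≠ 0 := pow_ne_zero _ hw0
  exact hc (mul_right_cancel₀ hwN (by rw [one_mul, ← hkeyN])).symm
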